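/- If a trajectory q : [0,T] → 𝕢 satisfies the global stability condition ℰ(t, q(t)) ≤ ℰ(t, q̃) + 𝒟(q(t), q̃) for all t ∈ [0,T] and all q̃ ∈ 𝕢, and if θ ↦ ∂_t ℰ(θ, q(s)) is continuous in θ, then the lower energy inequality holds: for all 0 ≤ s ≤ t ≤ T, ℰ(t, q(t)) + Var(𝒟, q; s, t) ≥ ℰ(s, q(s)) + ∫_s^t ∂_t ℰ(θ, q(θ)) dθ, provided (t,q) ↦ ∂_t ℰ(t,q) is suitably uniformly continuous along the trajectory. -/

import Mathlib

open MeasureTheory Filter Topology Set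
open scoped RealInnerProductSpace ENNReal NNReal

noncomputable section

abbrev E3 : Type := EuclideanSpace ℝ (Fin 3)
abbrev Mat3 : Type := Matrix (Fin 3) (Fin 3) ℝ

def gradMat (y : E3 → E3) (x : E3) : Mat3 :=
  Matrix.of fun i j => fderiv ℝ y x (EuclideanSpace.single j 1) i

def detGrad (y : E3 → E3) (x : E3) : ℝ := (gradMat y x).det

def cof (F : Mat3) : Mat3 := (Matrix.adjugate F).transpose

def matNorm (F : Mat3) : ℝ := Real.sqrt (∑ i, ∑ j, (F i j)^2)

def gradCol (m : E3 → E3) (j : Fin 3) (z : E3) : E3 :=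
  fderiv ℝ m z (EuclideanSpace.single j 1)

def IsLipschitzDomain (Ω : Set E3) : Prop :=
  IsOpen Ω ∧ Bornology.IsBounded Ω ∧
  ∀ x ∈ frontier Ω, ∃ (U : Set E3) (v : E3) (L : NNReal) (φ : E3 → ℝ),
    IsOpen U ∧ x ∈ U ∧ LipschitzWith L φ ∧
    ∀ z ∈ U, (z ∈ Ω ↔ φ z < ⟪v, z⟫)

def MemW1p (A : Set E3) (p : ℝ≥0∞) (y : E3 → E3) : Prop :=
  (∀ᵐ x ∂(volume.restrict A), DifferentiableAt ℝ y x) ∧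
  MemLp y p (volume.restrict A) ∧
  MemLp (fun x => fderiv ℝ y x) p (volume.restrict A)

def defConfig (Ω : Set E3) (y : E3 → E3) : Set E3 :=
  y '' (closure Ω) \ y '' (frontier Ω)

def MemY (Ω Γ₀ : Set E3) (p : ℝ) (y : E3 → E3) : Prop :=
  MemW1p Ω (ENNReal.ofReal p) y ∧
  ContinuousOn y (closure Ω) ∧
  (∀ᵐ x ∂(volume.restrict Ω), detGrad y x = 1) ∧
  (∀ x ∈ Γ₀, y x = 0) ∧
  volume (defConfig Ω y) = volume Ω

def MemM (Ω : Set E3) (y : E3 → E3) (m : E3 → E3) : Prop :=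
  MemW1p (defConfig Ω y) 2 m ∧
  ∀ᵐ z ∂(volume.restrict (defConfig Ω y)), ‖m z‖ = 1

def WeakLp (A : Set E3) (q : ℝ) (f : ℕ → E3 → E3) (g : E3 → E3) : Prop :=
  ∀ φ : E3 → E3, MemLp φ (ENNReal.ofReal q) (volume.restrict A) →
    Tendsto (fun k => ∫ x in A, ⟪f k x, φ x⟫) atTop (𝓝 (∫ x in A, ⟪g x, φ x⟫))

def WeakW1p (A : Set E3) (q : ℝ) (f : ℕ → E3 → E3) (g : E3 → E3) : Prop :=
  WeakLp A q f g ∧ ∀ j : Fin 3, WeakLp A q (fun k => gradCol (f k) j) (gradCol g j)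

def StrongL2 (f : ℕ → E3 → E3) (g : E3 → E3) : Prop :=
  Tendsto (fun k => eLpNorm (fun z => f k z - g z) 2 volume) atTop (𝓝 0)

def WeakL2 (f : ℕ → E3 → E3) (g : E3 → E3) : Prop :=
  ∀ φ : E3 → E3, MemLp φ 2 volume →
    Tendsto (fun k => ∫ z, ⟪f k z, φ z⟫) atTop (𝓝 (∫ z, ⟪g z, φ z⟫))


/-- The set of partition sums defining the total 𝒟-variation of `q` on `[s,t]`. -/
def varSums {X : Type*} (D : X → X → ℝ) (q : ℝ → X) (s t : ℝ) : Set ℝ :=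
  {r | ∃ (J : ℕ) (τ : ℕ → ℝ), Monotone τ ∧ τ 0 = s ∧ τ J = t ∧
    (∀ i ≤ J, τ i ∈ Set.Icc s t) ∧
    r = ∑ i ∈ Finset.range J, D (q (τ i)) (q (τ (i+1)))}

/-- lower energy inequality for globally stable trajectories. -/
theorem stmt_16 {Q : Type*} (E DE : ℝ → Q → ℝ) (D : Q → Q → ℝ)
    (hDnn : ∀ q₁ q₂, 0 ≤ D q₁ q₂)
    (hDtri : ∀ q₁ q₂ q₃, D q₁ q₃ ≤ D q₁ q₂ + D q₂ q₃)
    (T : ℝ) (hT : 0 ≤ T) (q : ℝ → Q)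
    (hstab : ∀ t ∈ Set.Icc (0:ℝ) T, ∀ qt, E t (q t) ≤ E t qt + D (q t) qt)
    (hderiv : ∀ (p : Q) (t : ℝ), HasDerivAt (fun s => E s p) (DE t p) t)
    (hcont : ∀ p : Q, Continuous fun θ => DE θ p)
    (hint : ∀ s t : ℝ, IntervalIntegrable (fun θ => DE θ (q θ)) volume s t)
    (hU : ∀ ε > 0, ∃ δ > 0, ∀ σ τ : ℝ, σ ∈ Set.Icc (0:ℝ) T → τ ∈ Set.Icc (0:ℝ) T →
      |σ - τ| ≤ δ → ∀ θ ∈ Set.Icc (0:ℝ) T, |DE θ (q σ) - DE θ (q τ)| ≤ ε)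
    (s t : ℝ) (hs : 0 ≤ s) (hst : s ≤ t) (htT : t ≤ T)
    (hbdd : BddAbove (varSums D q s t)) :
    E s (q s) + ∫ θ in s..t, DE θ (q θ) ≤ E t (q t) + sSup (varSums D q s t) := by
  rcases eq_or_lt_of_le hst with rfl | hlt
  · simp only [intervalIntegral.integral_same, add_zero]
    have h0 : (0:ℝ) ∈ varSums D q s s :=
      ⟨0, fun _ => s, monotone_const, rfl, rfl, fun i _ => ⟨le_refl s, le_refl s⟩, by simp⟩
    have := le_csSup hbdd h0
    linarith
  · apply le_of_forall_pos_le_add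
    intro ε hε
    have hts : 0 < t - s := by linarith
    set ε' := ε / (t - s) with hε'def
    have hε' : 0 < ε' := div_pos hε hts
    obtain ⟨δ, hδ, hδU⟩ := hU ε' hε'
    obtain ⟨N, hN⟩ := exists_nat_gt ((t - s) / δ)
    have hNpos : 0 < (N:ℝ) := lt_of_le_of_lt (div_nonneg hts.le hδ.le) hN
    set h := (t - s) / N with hhdef
    have hh : 0 < h := div_pos hts hNpos
    have hhδ : h ≤ δ := by
      rw [hhdef, div_le_iff₀ hNpos]
      rw [div_lt_iff₀ hδ] at hN
      linarith [hN]
    set τ : ℕ → ℝ := fun i => s + (min i N : ℕ) * h with hτdef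
    have hτ0 : τ 0 = s := by simp [hτdef]
    have hτN : τ N = t := by
      have hN0 : (N:ℝ) ≠ 0 := ne_of_gt hNpos
      simp [hτdef, hhdef]
      field_simp
      ring
    have hτmono : Monotone τ := by
      intro i j hij
      have : (min i N : ℕ) ≤ min j N := by omega
      have : ((min i N : ℕ) : ℝ) ≤ ((min j N : ℕ) : ℝ) := by exact_mod_cast this
      simp only [hτdef]
      nlinarith [hh.le]
    have hτmem : ∀ i, τ i ∈ Set.Icc s t := by
      intro i
      constructor
      · simp only [hτdef]
        have hnn : (0:ℝ) ≤ ((min i N : ℕ) : ℝ) := Nat.cast_nonneg _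
        nlinarith [hh.le]
      · have h1 : ((min i N : ℕ) : ℝ) ≤ (N : ℝ) := by
          exact_mod_cast min_le_right i N
        have h2 : (N : ℝ) * h = t - s := by
          rw [hhdef]; field_simp
        simp only [hτdef]
        nlinarith [hh.le]
    have hτmem0T : ∀ i, τ i ∈ Set.Icc (0:ℝ) T := fun i =>
      ⟨le_trans hs (hτmem i).1, le_trans (hτmem i).2 htT⟩
    have hstep : ∀ i < N, τ (i + 1) = τ i + h := by
      intro i hi
      have h1 : min (i+1) N = i + 1 := min_eq_left hi
      have h2 : min i N = i := min_eq_left hi.le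
      simp only [hτdef, h1, h2]
      push_cast
      ring
    -- per-interval key inequality
    have key : ∀ i < N, (∫ θ in τ i..τ (i+1), DE θ (q θ)) ≤
        E (τ (i+1)) (q (τ (i+1))) - E (τ i) (q (τ i)) + D (q (τ i)) (q (τ (i+1))) + ε' * h := by
      intro i hi
      have hstepi := hstep i hi
      have hle : τ i ≤ τ (i+1) := by rw [hstepi]; linarith
      set p := q (τ (i+1)) with hp
      -- pointwise bound
      have hptwise : ∀ θ ∈ Set.Icc (τ i) (τ (i+1)), DE θ (q θ) ≤ DE θ p + ε' := by
        intro θ hθ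
        have hθ0T : θ ∈ Set.Icc (0:ℝ) T :=
          ⟨le_trans (hτmem0T i).1 hθ.1, le_trans hθ.2 (hτmem0T (i+1)).2⟩
        have hdist : |θ - τ (i+1)| ≤ δ := by
          rw [abs_le]
          constructor
          · have := hθ.1; rw [hstepi] at *; linarith
          · linarith [hθ.2]
        have := hδU θ (τ (i+1)) hθ0T (hτmem0T (i+1)) hdist θ hθ0T
        have h' := abs_le.mp this
        linarith [h'.2]
      have hint1 : IntervalIntegrable (fun θ => DE θ (q θ)) volume (τ i) (τ (i+1)) :=
        hint _ _
      have hint2 : IntervalIntegrable (fun θ => DE θ p + ε') volume (τ i) (τ (i+1)) :=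
        ((hcont p).add continuous_const).intervalIntegrable _ _
      have hmono : (∫ θ in τ i..τ (i+1), DE θ (q θ)) ≤ ∫ θ in τ i..τ (i+1), (DE θ p + ε') :=
        intervalIntegral.integral_mono_on hle hint1 hint2 hptwise
      have hsplit : (∫ θ in τ i..τ (i+1), (DE θ p + ε')) =
          (∫ θ in τ i..τ (i+1), DE θ p) + ε' * h := by
        rw [intervalIntegral.integral_add (((hcont p)).intervalIntegrable _ _)
          (intervalIntegrable_const)]
        have hdiff : τ (i+1) - τ i = h := by rw [hstepi]; ring
        rw [intervalIntegral.integral_const, hdiff, smul_eq_mul, mul_comm]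
      have hFTC : (∫ θ in τ i..τ (i+1), DE θ p) = E (τ (i+1)) p - E (τ i) p := by
        exact intervalIntegral.integral_eq_sub_of_hasDerivAt
          (fun x _ => hderiv p x) (((hcont p)).intervalIntegrable _ _)
      have hstabi : E (τ i) (q (τ i)) ≤ E (τ i) p + D (q (τ i)) p :=
        hstab (τ i) (hτmem0T i) p
      rw [hsplit, hFTC] at hmono
      linarith
    -- sum up
    have hsum : (∫ θ in s..t, DE θ (q θ)) =
        ∑ i ∈ Finset.range N, ∫ θ in τ i..τ (i+1), DE θ (q θ) := by
      rw [intervalIntegral.sum_integral_adjacent_intervals (fun k _ => hint _ _), hτ0, hτN]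
    have htele : ∑ i ∈ Finset.range N,
        (E (τ (i+1)) (q (τ (i+1))) - E (τ i) (q (τ i))) = E t (q t) - E s (q s) := by
      rw [Finset.sum_range_sub (fun i => E (τ i) (q (τ i))), hτ0, hτN]
    have hsumle : (∫ θ in s..t, DE θ (q θ)) ≤
        ∑ i ∈ Finset.range N, (E (τ (i+1)) (q (τ (i+1))) - E (τ i) (q (τ i))
          + D (q (τ i)) (q (τ (i+1))) + ε' * h) := by
      rw [hsum]
      exact Finset.sum_le_sum (fun i hi => key i (Finset.mem_range.mp hi))
    have hsum_split : ∑ i ∈ Finset.range N, (E (τ (i+1)) (q (τ (i+1))) - E (τ i) (q (τ i))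
          + D (q (τ i)) (q (τ (i+1))) + ε' * h)
        = (E t (q t) - E s (q s)) + (∑ i ∈ Finset.range N, D (q (τ i)) (q (τ (i+1)))) + ε := by
      rw [Finset.sum_add_distrib, Finset.sum_add_distrib, htele]
      congr 1
      rw [Finset.sum_const, Finset.card_range, nsmul_eq_mul]
      rw [hhdef, hε'def]
      field_simp
    have hDmem : (∑ i ∈ Finset.range N, D (q (τ i)) (q (τ (i+1)))) ∈ varSums D q s t :=
      ⟨N, τ, hτmono, hτ0, hτN, fun i _ => hτmem i, rfl⟩
    have hDle : (∑ i ∈ Finset.range N, D (q (τ i)) (q (τ (i+1)))) ≤ sSup (varSums D q s t) :=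
      le_csSup hbdd hDmem
    linarith [hsumle, hsum_split.le, hsum_split.ge]

end
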